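/- Consider the first-order constraint-preserving scheme on an N × N periodic grid (indices in ℤ/N) with constant ε, μ > 0, c = 1/√(εμ), and square cells Δx = Δy = h > 0. Assume the time-dependent grid functions (Dx)_{i+1/2,j}, (Dy)_{i,j+1/2}, (Bz)_{i,j} are differentiable and satisfy the semi-discrete scheme with the dissipative multidimensional Riemann fluxes. Then the discrete total energy E*_h(t) = Σ_{i,j} [ (Dx)²_{i+1/2,j} + (Dy)²_{i,j+1/2} ] h²/(2ε) + Σ_{i,j} (Bz)²_{i,j} h²/(2μ) is nonincreasing: d/dt E*_h(t) ≤ 0 for all t. -/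

import Mathlib

set_option maxHeartbeats 1000000


/-- Energy stability of the first-order constraint-preserving scheme on
an `N × N` periodic grid with constant `ε, μ > 0`, `c = 1/√(εμ)` and square cells
`Δx = Δy = h > 0`, using the dissipative multidimensional Riemann fluxes: the discrete
total energy is nonincreasing.

Indexing convention: `Dx i j = (Dx)_{i+1/2,j}`, `Dy i j = (Dy)_{i,j+1/2}`,
`Bz i j = (Bz)_{i,j}`, `Ht i j = H̃z_{i+1/2,j+1/2}`, `Etx i j = Ẽx_{i,j+1/2}`,
`Ety i j = Ẽy_{i+1/2,j}`. -/
theorem first_order_scheme_energy_stability_square_cells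
    (N : ℕ) [NeZero N]
    (eps mu c h : ℝ) (heps : 0 < eps) (hmu : 0 < mu)
    (hc : c = 1 / Real.sqrt (eps * mu)) (hh : 0 < h)
    (Dx Dy Bz Ex Ey Hz Ht Etx Ety : ZMod N → ZMod N → ℝ → ℝ)
    (hEx : ∀ i j t, Ex i j t = Dx i j t / eps)
    (hEy : ∀ i j t, Ey i j t = Dy i j t / eps)
    (hHz : ∀ i j t, Hz i j t = Bz i j t / mu)
    (hHt : ∀ i j t, Ht i j t =
      (1/4) * (Hz i j t + Hz (i+1) j t + Hz i (j+1) t + Hz (i+1) (j+1) t)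
      + (eps * c / 2) * (Ex i (j+1) t - Ex i j t)
      - (eps * c / 2) * (Ey (i+1) j t - Ey i j t))
    (hEtx : ∀ i j t, Etx i j t =
      (1/4) * (Ex (i-1) j t + Ex i j t + Ex (i-1) (j+1) t + Ex i (j+1) t)
      + (mu * c / 2) * (Hz i (j+1) t - Hz i j t))
    (hEty : ∀ i j t, Ety i j t =
      (1/4) * (Ey i (j-1) t + Ey i j t + Ey (i+1) (j-1) t + Ey (i+1) j t)
      - (mu * c / 2) * (Hz (i+1) j t - Hz i j t))
    (hdx : ∀ i j t, HasDerivAt (Dx i j) ((Ht i j t - Ht i (j-1) t) / h) t)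
    (hdy : ∀ i j t, HasDerivAt (Dy i j) (-((Ht i j t - Ht (i-1) j t) / h)) t)
    (hbz : ∀ i j t, HasDerivAt (Bz i j)
      (-((Ety i j t - Ety (i-1) j t) / h) + (Etx i j t - Etx i (j-1) t) / h) t) :
    ∀ t : ℝ, deriv (fun s =>
      (∑ i : ZMod N, ∑ j : ZMod N,
        ((Dx i j s) ^ 2 + (Dy i j s) ^ 2) * h ^ 2 / (2 * eps))
      + ∑ i : ZMod N, ∑ j : ZMod N, (Bz i j s) ^ 2 * h ^ 2 / (2 * mu)) t ≤ 0 := by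
  intro t
  have heps' : eps ≠ 0 := ne_of_gt heps
  have hmu' : mu ≠ 0 := ne_of_gt hmu
  have hh' : h ≠ 0 := ne_of_gt hh
  have hc0 : 0 ≤ c := by
    rw [hc]
    positivity
  have hA : 0 ≤ eps * c / 2 := by positivity
  have hB : 0 ≤ mu * c / 2 := by positivity
  -- abbreviations for the dissipative part and the telescoping correctors
  set Q : ZMod N → ZMod N → ℝ := fun i j =>
    -(eps * c / 2) * ((Ex i (j+1) t - Ex i j t) - (Ey (i+1) j t - Ey i j t)) ^ 2
    - (mu * c / 2) * ((Hz (i+1) j t - Hz i j t) ^ 2 + (Hz i (j+1) t - Hz i j t) ^ 2)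
    with hQdef
  set G1 : ZMod N → ZMod N → ℝ := fun i j =>
    (eps * c / 2) * ( Ex (i-1) (j-1) t * Ex (i-1) j t - Ex (i-1) j t ^ 2
      - Ex (i-1) j t * Ex (i-1) (j+1) t - Ex (i-1) j t * Ey (i-1) (j-1) t
      + Ex (i-1) j t * Ey i (j-1) t + Ex (i-1) j t * Ey i j t
      + Ex (i-1) (j+1) t ^ 2 + Ex (i-1) (j+1) t * Ey (i-1) j t
      - 2 * Ex (i-1) (j+1) t * Ey i j t - Ey (i-1) j t * Ey i j t + Ey i j t ^ 2 )
    + (1/4) * ( -(Ex (i-1) (j-1) t * Hz (i-1) j t) - Ex (i-1) j t * Hz (i-1) (j-1) t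
      + Ex (i-1) j t * Hz (i-1) (j+1) t - Ex (i-1) j t * Hz i (j-1) t
      + Ex (i-1) j t * Hz i (j+1) t + Ex (i-1) (j+1) t * Hz (i-1) j t
      - Ey (i-1) j t * Hz i j t - Ey (i-1) j t * Hz i (j+1) t
      - Ey i (j-1) t * Hz (i-1) j t - Ey i j t * Hz (i-1) j t )
    + (mu * c / 2) * ( Hz (i-1) (j-1) t * Hz (i-1) j t - Hz (i-1) j t ^ 2
      - Hz (i-1) j t * Hz (i-1) (j+1) t - Hz (i-1) j t * Hz i j t
      + Hz (i-1) (j+1) t ^ 2 + Hz i j t ^ 2 )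
    with hG1def
  set G2 : ZMod N → ZMod N → ℝ := fun i j =>
    (eps * c / 2) * ( -(Ex (i-1) (j-1) t * Ex (i-1) j t) + Ex (i-1) j t ^ 2
      + Ex (i-1) j t * Ey (i-1) (j-1) t - Ex (i-1) j t * Ey i (j-1) t )
    + (1/4) * ( Ex (i-1) (j-1) t * Hz (i-1) j t + Ex (i-1) (j-1) t * Hz i j t
      + Ex (i-1) j t * Hz (i-1) (j-1) t + Ex (i-1) j t * Hz i (j-1) t
      - Ey (i-1) (j-1) t * Hz i j t + Ey i (j-1) t * Hz (i-1) j t )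
    + (mu * c / 2) * ( -(Hz (i-1) (j-1) t * Hz (i-1) j t) + Hz (i-1) j t ^ 2 )
    with hG2def
  -- derivative of the energy
  have hterm1 : ∀ i j : ZMod N, HasDerivAt (fun s => (Dx i j s ^ 2 + Dy i j s ^ 2) * h ^ 2 / (2 * eps))
      ((2 * Dx i j t * ((Ht i j t - Ht i (j-1) t) / h)
        + 2 * Dy i j t * (-((Ht i j t - Ht (i-1) j t) / h))) * h ^ 2 / (2 * eps)) t := by
    intro i j
    have H := ((((hdx i j t).pow 2).add ((hdy i j t).pow 2)).mul_const (h ^ 2)).div_const (2 * eps)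
    convert H using 1
    all_goals norm_num
    all_goals rfl
  have hterm2 : ∀ i j : ZMod N, HasDerivAt (fun s => Bz i j s ^ 2 * h ^ 2 / (2 * mu))
      ((2 * Bz i j t * (-((Ety i j t - Ety (i-1) j t) / h) + (Etx i j t - Etx i (j-1) t) / h))
        * h ^ 2 / (2 * mu)) t := by
    intro i j
    have H := (((hbz i j t).pow 2).mul_const (h ^ 2)).div_const (2 * mu)
    convert H using 1
    all_goals norm_num
    all_goals rfl
  have hD : HasDerivAt (fun s =>
      (∑ i : ZMod N, ∑ j : ZMod N, ((Dx i j s) ^ 2 + (Dy i j s) ^ 2) * h ^ 2 / (2 * eps))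
      + ∑ i : ZMod N, ∑ j : ZMod N, (Bz i j s) ^ 2 * h ^ 2 / (2 * mu))
      ((∑ i : ZMod N, ∑ j : ZMod N,
        (2 * Dx i j t * ((Ht i j t - Ht i (j-1) t) / h)
          + 2 * Dy i j t * (-((Ht i j t - Ht (i-1) j t) / h))) * h ^ 2 / (2 * eps))
      + ∑ i : ZMod N, ∑ j : ZMod N,
        (2 * Bz i j t * (-((Ety i j t - Ety (i-1) j t) / h) + (Etx i j t - Etx i (j-1) t) / h))
          * h ^ 2 / (2 * mu)) t := by
    exact (HasDerivAt.fun_sum fun i _ => HasDerivAt.fun_sum fun j _ => hterm1 i j).add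
      (HasDerivAt.fun_sum fun i _ => HasDerivAt.fun_sum fun j _ => hterm2 i j)
  rw [hD.deriv]
  -- per-cell energy identity with telescoping correctors
  have hQG : ∀ i j : ZMod N,
      (2 * Dx i j t * ((Ht i j t - Ht i (j-1) t) / h)
        + 2 * Dy i j t * (-((Ht i j t - Ht (i-1) j t) / h))) * h ^ 2 / (2 * eps)
      + (2 * Bz i j t * (-((Ety i j t - Ety (i-1) j t) / h) + (Etx i j t - Etx i (j-1) t) / h))
          * h ^ 2 / (2 * mu)
      = h * (Q i j + (G1 (i+1) j - G1 i j) + (G2 i (j+1) - G2 i j)) := by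
    intro i j
    simp only [hQdef, hG1def, hG2def, hHt, hEtx, hEty, sub_add_cancel, add_sub_cancel_right]
    simp only [hEx, hEy, hHz]
    field_simp
    ring
  -- shift invariance of sums over `ZMod N`
  have shiftI : ∀ f : ZMod N → ℝ, (∑ i : ZMod N, f (i + 1)) = ∑ i : ZMod N, f i := by
    intro f
    exact Equiv.sum_comp (Equiv.addRight (1 : ZMod N)) f
  have hG1sum : (∑ i : ZMod N, ∑ j : ZMod N, (G1 (i+1) j - G1 i j)) = 0 := by
    have h1 : (∑ i : ZMod N, ∑ j : ZMod N, G1 (i+1) j) = ∑ i : ZMod N, ∑ j : ZMod N, G1 i j :=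
      shiftI (fun i => ∑ j : ZMod N, G1 i j)
    simp [Finset.sum_sub_distrib, h1]
  have hG2sum : (∑ i : ZMod N, ∑ j : ZMod N, (G2 i (j+1) - G2 i j)) = 0 := by
    refine Finset.sum_eq_zero fun i _ => ?_
    have h1 : (∑ j : ZMod N, G2 i (j+1)) = ∑ j : ZMod N, G2 i j :=
      shiftI (fun j => G2 i j)
    simp [Finset.sum_sub_distrib, h1]
  have hQle : (∑ i : ZMod N, ∑ j : ZMod N, Q i j) ≤ 0 := by
    refine Finset.sum_nonpos fun i _ => Finset.sum_nonpos fun j _ => ?_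
    simp only [hQdef]
    nlinarith [sq_nonneg ((Ex i (j+1) t - Ex i j t) - (Ey (i+1) j t - Ey i j t)),
      sq_nonneg (Hz (i+1) j t - Hz i j t), sq_nonneg (Hz i (j+1) t - Hz i j t)]
  have split : ∀ (F G K : ZMod N → ZMod N → ℝ),
      (∑ i : ZMod N, ∑ j : ZMod N, h * (F i j + G i j + K i j))
      = h * ((∑ i : ZMod N, ∑ j : ZMod N, F i j) + (∑ i : ZMod N, ∑ j : ZMod N, G i j)
          + (∑ i : ZMod N, ∑ j : ZMod N, K i j)) := by
    intro F G K
    simp only [mul_add, Finset.sum_add_distrib, Finset.mul_sum]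
  calc (∑ i : ZMod N, ∑ j : ZMod N,
        (2 * Dx i j t * ((Ht i j t - Ht i (j-1) t) / h)
          + 2 * Dy i j t * (-((Ht i j t - Ht (i-1) j t) / h))) * h ^ 2 / (2 * eps))
      + ∑ i : ZMod N, ∑ j : ZMod N,
        (2 * Bz i j t * (-((Ety i j t - Ety (i-1) j t) / h) + (Etx i j t - Etx i (j-1) t) / h))
          * h ^ 2 / (2 * mu)
      = ∑ i : ZMod N, ∑ j : ZMod N,
          h * (Q i j + (G1 (i+1) j - G1 i j) + (G2 i (j+1) - G2 i j)) := by
        rw [← Finset.sum_add_distrib]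
        refine Finset.sum_congr rfl fun i _ => ?_
        rw [← Finset.sum_add_distrib]
        exact Finset.sum_congr rfl fun j _ => hQG i j
    _ = h * ((∑ i : ZMod N, ∑ j : ZMod N, Q i j)
          + (∑ i : ZMod N, ∑ j : ZMod N, (G1 (i+1) j - G1 i j))
          + (∑ i : ZMod N, ∑ j : ZMod N, (G2 i (j+1) - G2 i j))) := by
        rw [split Q (fun i j => G1 (i+1) j - G1 i j) (fun i j => G2 i (j+1) - G2 i j)]
    _ = h * (∑ i : ZMod N, ∑ j : ZMod N, Q i j) := by rw [hG1sum, hG2sum]; ring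
    _ ≤ 0 := mul_nonpos_of_nonneg_of_nonpos hh.le hQle
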